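/- Every edge-colored complete graph on n ≥ 2 vertices containing no rainbow triangle admits a Gallai partition: a partition U1, …, Uq of the vertex set with q ≥ 2 such that at most two colors appear on edges between distinct parts and exactly one color appears between each pair of parts. -/

import Mathlib

/-- Number of edges of color `a` incident with `v` (monochromatic degree). -/
noncomputable def monDeg {V : Type*} (col : V → V → ℕ) (v : V) (a : ℕ) : ℕ :=
  {u | u ≠ v ∧ col v u = a}.ncard

/-- Color degree of a vertex: number of distinct colors on incident edges. -/
noncomputable def colorDeg {V : Type*} (col : V → V → ℕ) (v : V) : ℕ :=
  (col v '' {u | u ≠ v}).ncard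

/-- Maximum monochromatic degree Δ^mon. -/
noncomputable def maxMonDeg {V : Type*} (col : V → V → ℕ) : ℕ :=
  sSup {d | ∃ v a, d = monDeg col v a}

/-- Number of colors appearing on edges. -/
noncomputable def numColors {V : Type*} (col : V → V → ℕ) : ℕ :=
  {a | ∃ u v : V, u ≠ v ∧ col u v = a}.ncard

/-- A properly edge-colored (PC) cycle of length `m`, given by an injective
map `c : ZMod m → V`; adjacent edges get distinct colors. -/
def IsPCCycle {V : Type*} (col : V → V → ℕ) (m : ℕ) (c : ZMod m → V) : Prop :=
  3 ≤ m ∧ Function.Injective c ∧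
    ∀ i : ZMod m, col (c i) (c (i + 1)) ≠ col (c (i + 1)) (c (i + 2))

/-- `k` pairwise vertex-disjoint PC cycles. -/
def HasKDisjointPCCycles {V : Type*} (col : V → V → ℕ) (k : ℕ) : Prop :=
  ∃ (m : Fin k → ℕ) (c : ∀ j, ZMod (m j) → V),
    (∀ j, IsPCCycle col (m j) (c j)) ∧
    ∀ j j', j ≠ j' → Disjoint (Set.range (c j)) (Set.range (c j'))

/-- `k` pairwise vertex-disjoint PC cycles, each of length at most 4. -/
def HasKDisjointShortPCCycles {V : Type*} (col : V → V → ℕ) (k : ℕ) : Prop :=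
  ∃ (m : Fin k → ℕ) (c : ∀ j, ZMod (m j) → V),
    (∀ j, IsPCCycle col (m j) (c j) ∧ m j ≤ 4) ∧
    ∀ j j', j ≠ j' → Disjoint (Set.range (c j)) (Set.range (c j'))

/-- A directed cycle of length `m` in a digraph with arc relation `A`. -/
def IsDicycle {V : Type*} (A : V → V → Prop) (m : ℕ) (c : ZMod m → V) : Prop :=
  2 ≤ m ∧ Function.Injective c ∧ ∀ i : ZMod m, A (c i) (c (i + 1))

/-- `k` pairwise vertex-disjoint directed cycles. -/
def HasKDisjointDicycles {V : Type*} (A : V → V → Prop) (k : ℕ) : Prop :=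
  ∃ (m : Fin k → ℕ) (c : ∀ j, ZMod (m j) → V),
    (∀ j, IsDicycle A (m j) (c j)) ∧
    ∀ j j', j ≠ j' → Disjoint (Set.range (c j)) (Set.range (c j'))

/-- A monochromatic edge-cut: a bipartition with all crossing edges one color. -/
def HasMonochromaticCut {V : Type*} (col : V → V → ℕ) : Prop :=
  ∃ S : Set V, S.Nonempty ∧ Sᶜ.Nonempty ∧ ∃ a, ∀ x ∈ S, ∀ y ∈ Sᶜ, col x y = a

/-- A rainbow triangle: three vertices with pairwise distinct edge colors. -/
def HasRainbowTriangle {V : Type*} (col : V → V → ℕ) : Prop :=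
  ∃ x y z : V, x ≠ y ∧ y ≠ z ∧ x ≠ z ∧
    col x y ≠ col y z ∧ col y z ≠ col x z ∧ col x y ≠ col x z

/-- A Gallai partition of an edge-colored complete graph. -/
def HasGallaiPartition {V : Type*} (col : V → V → ℕ) : Prop :=
  ∃ (q : ℕ) (U : Fin q → Set V), 2 ≤ q ∧ (∀ i, (U i).Nonempty) ∧
    (∀ i j, i ≠ j → Disjoint (U i) (U j)) ∧ (⋃ i, U i) = Set.univ ∧
    (∀ i j, i ≠ j → ∃ a, ∀ x ∈ U i, ∀ y ∈ U j, col x y = a) ∧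
    ∃ a b, ∀ i j, i ≠ j → ∀ x ∈ U i, ∀ y ∈ U j, col x y = a ∨ col x y = b

namespace GallaiAux

open Set

variable {V : Type*}

lemma noRb3 (col : V → V → ℕ)
    (hrb : ¬ (∃ x y z : V, x ≠ y ∧ y ≠ z ∧ x ≠ z ∧
      col x y ≠ col y z ∧ col y z ≠ col x z ∧ col x y ≠ col x z)) :
    ∀ x y z : V, x ≠ y → y ≠ z → x ≠ z →
      (col x y = col y z ∨ col y z = col x z ∨ col x y = col x z) := by
  intro x y z h1 h2 h3
  by_contra h
  push_neg at h
  exact hrb ⟨x, y, z, h1, h2, h3, h.1, h.2.1, h.2.2⟩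

/-- A nontrivial module of `S`. -/
def IsMod (col : V → V → ℕ) (S M : Set V) : Prop :=
  M ⊆ S ∧ 2 ≤ M.ncard ∧ M ≠ S ∧ ∀ z ∈ S \ M, ∃ c, ∀ x ∈ M, col x z = c

/-- A Gallai partition of the set `S`. -/
def AuxPart (col : V → V → ℕ) (S : Set V) : Prop :=
  ∃ (q : ℕ) (U : Fin q → Set V), 2 ≤ q ∧ (∀ i, (U i).Nonempty) ∧ (∀ i, U i ⊆ S) ∧
    (∀ i j, i ≠ j → Disjoint (U i) (U j)) ∧ (⋃ i, U i) = S ∧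
    (∀ i j, i ≠ j → ∃ a, ∀ x ∈ U i, ∀ y ∈ U j, col x y = a) ∧
    ∃ a b, ∀ i j, i ≠ j → ∀ x ∈ U i, ∀ y ∈ U j, col x y = a ∨ col x y = b

/-- Contract a module. -/
lemma contract (col : V → V → ℕ) (hsymm : ∀ u v, col u v = col v u)
    (S M : Set V) (hM : IsMod col S M) (m : V) (hm : m ∈ M)
    (hA : AuxPart col ((S \ M) ∪ {m})) : AuxPart col S := by
  obtain ⟨hMS, hM2, hMne, hmod⟩ := hM
  obtain ⟨q, U, hq, hne, hsub, hdisj, hcover, hmono, a, b, htwo⟩ := hA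
  have hmS : m ∈ (S \ M) ∪ {m} := by right; rfl
  have : m ∈ ⋃ i, U i := hcover ▸ hmS
  obtain ⟨i0, hi0⟩ := mem_iUnion.1 this
  have hUM : ∀ j, j ≠ i0 → ∀ y ∈ U j, y ∈ S \ M := by
    intro j hj y hy
    have hyS : y ∈ (S \ M) ∪ {m} := hsub j hy
    rcases hyS with h | h
    · exact h
    · exfalso
      have : y ∈ U i0 := by rw [mem_singleton_iff] at h; rw [h]; exact hi0
      exact (hdisj j i0 hj).ne_of_mem hy this rfl
  have hU0 : ∀ y ∈ U i0 ∪ M, y ∈ S := by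
    intro y hy
    rcases hy with h1 | h1
    · rcases hsub i0 h1 with h2 | h2
      · exact h2.1
      · rw [mem_singleton_iff] at h2; rw [h2]; exact hMS hm
    · exact hMS h1
  -- key pointwise facts
  have keyL : ∀ x ∈ U i0 ∪ M, ∀ y ∈ S \ M, ∀ c, (∀ x' ∈ U i0, col x' y = c) → col x y = c := by
    intro x hx y hy c hc
    rcases hx with h1 | h1
    · exact hc x h1
    · obtain ⟨c', hc'⟩ := hmod y hy
      rw [hc' x h1, ← hc' m hm]
      exact hc m hi0
  refine ⟨q, Function.update U i0 (U i0 ∪ M), hq, ?_, ?_, ?_, ?_, ?_, ?_⟩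
  · intro i
    rcases eq_or_ne i i0 with h | h
    · subst h; rw [Function.update_self]; exact (hne i).mono subset_union_left
    · rw [Function.update_of_ne h]; exact hne i
  · intro i x hx
    rcases eq_or_ne i i0 with h | h
    · subst h; rw [Function.update_self] at hx; exact hU0 x hx
    · rw [Function.update_of_ne h] at hx; exact (hUM i h x hx).1
  · intro i j hij
    rcases eq_or_ne i i0 with h | h
    · subst h
      rw [Function.update_self, Function.update_of_ne hij.symm]
      refine disjoint_union_left.2 ⟨hdisj i j hij, ?_⟩
      rw [disjoint_left]
      intro y hyM hyU
      exact (hUM j hij.symm y hyU).2 hyM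
    · rcases eq_or_ne j i0 with h2 | h2
      · subst h2
        rw [Function.update_self, Function.update_of_ne h]
        refine (disjoint_union_left.2 ⟨hdisj j i hij.symm, ?_⟩).symm
        rw [disjoint_left]
        intro y hyM hyU
        exact (hUM i h y hyU).2 hyM
      · rw [Function.update_of_ne h, Function.update_of_ne h2]
        exact hdisj i j hij
  · apply Subset.antisymm
    · intro x hx
      rcases mem_iUnion.1 hx with ⟨i, hi⟩
      rcases eq_or_ne i i0 with h | h
      · subst h; rw [Function.update_self] at hi; exact hU0 x hi
      · rw [Function.update_of_ne h] at hi; exact (hUM i h x hi).1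
    · intro x hx
      by_cases hxM : x ∈ M
      · exact mem_iUnion.2 ⟨i0, by rw [Function.update_self]; exact Or.inr hxM⟩
      · have : x ∈ (S \ M) ∪ {m} := Or.inl ⟨hx, hxM⟩
        have : x ∈ ⋃ i, U i := hcover ▸ this
        rcases mem_iUnion.1 this with ⟨i, hi⟩
        refine mem_iUnion.2 ⟨i, ?_⟩
        rcases eq_or_ne i i0 with h | h
        · subst h; rw [Function.update_self]; exact Or.inl hi
        · rw [Function.update_of_ne h]; exact hi
  · intro i j hij
    rcases eq_or_ne i i0 with h | h
    · subst h
      obtain ⟨c, hc⟩ := hmono i j hij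
      refine ⟨c, ?_⟩
      intro x hx y hy
      rw [Function.update_self] at hx
      rw [Function.update_of_ne hij.symm] at hy
      exact keyL x hx y (hUM j hij.symm y hy) c (fun x' hx' => hc x' hx' y hy)
    · rcases eq_or_ne j i0 with h2 | h2
      · subst h2
        obtain ⟨c, hc⟩ := hmono i j hij
        refine ⟨c, ?_⟩
        intro x hx y hy
        rw [Function.update_of_ne h] at hx
        rw [Function.update_self] at hy
        rw [hsymm x y]
        exact keyL y hy x (hUM i h x hx) c (fun y' hy' => (hsymm x y') ▸ hc x hx y' hy')
      · rw [Function.update_of_ne h, Function.update_of_ne h2]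
        obtain ⟨c, hc⟩ := hmono i j hij
        exact ⟨c, hc⟩
  · refine ⟨a, b, ?_⟩
    intro i j hij x hx y hy
    rcases eq_or_ne i i0 with h | h
    · subst h
      rw [Function.update_self] at hx
      rw [Function.update_of_ne hij.symm] at hy
      have hyS := hUM j hij.symm y hy
      rcases hx with h1 | h1
      · exact htwo i j hij x h1 y hy
      · obtain ⟨c', hc'⟩ := hmod y hyS
        rw [hc' x h1, ← hc' m hm]
        exact htwo i j hij m hi0 y hy
    · rcases eq_or_ne j i0 with h2 | h2
      · subst h2
        rw [Function.update_of_ne h] at hx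
        rw [Function.update_self] at hy
        have hxS := hUM i h x hx
        rcases hy with h1 | h1
        · exact htwo i j hij x hx y h1
        · obtain ⟨c', hc'⟩ := hmod x hxS
          rw [hsymm x y, hc' y h1, ← hc' m hm, ← hsymm x m]
          exact htwo i j hij x hx m hi0
      · rw [Function.update_of_ne h] at hx
        rw [Function.update_of_ne h2] at hy
        exact htwo i j hij x hx y hy


lemma singletons [Fintype V] (col : V → V → ℕ) (S : Set V) (h2 : 2 ≤ S.ncard)
    (htwo : ∃ a b, ∀ x ∈ S, ∀ y ∈ S, x ≠ y → (col x y = a ∨ col x y = b)) :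
    AuxPart col S := by
  haveI : Fintype S := S.toFinite.fintype
  have hcard : Fintype.card S = S.ncard := by
    rw [← Nat.card_eq_fintype_card, Nat.card_coe_set_eq]
  obtain ⟨a, b, hab⟩ := htwo
  set e : S ≃ Fin S.ncard := Fintype.equivFinOfCardEq hcard with he
  refine ⟨S.ncard, fun i => {(↑(e.symm i) : V)}, h2, fun i => ⟨_, rfl⟩, ?_, ?_, ?_, ?_, ?_⟩
  · intro i x hx
    rw [mem_singleton_iff] at hx
    rw [hx]; exact (e.symm i).2
  · intro i j hij
    rw [Set.disjoint_singleton]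
    intro h
    exact hij (by rw [← e.apply_symm_apply i, ← e.apply_symm_apply j,
      Subtype.coe_injective h])
  · apply Subset.antisymm
    · intro x hx
      rcases mem_iUnion.1 hx with ⟨i, hi⟩
      rw [mem_singleton_iff] at hi
      rw [hi]; exact (e.symm i).2
    · intro x hx
      exact mem_iUnion.2 ⟨e ⟨x, hx⟩, by rw [mem_singleton_iff, e.symm_apply_apply]⟩
  · intro i j hij
    refine ⟨col (↑(e.symm i)) (↑(e.symm j)), ?_⟩
    intro x hx y hy
    rw [mem_singleton_iff] at hx hy
    rw [hx, hy]
  · refine ⟨a, b, ?_⟩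
    intro i j hij x hx y hy
    rw [mem_singleton_iff] at hx hy
    subst hx; subst hy
    refine hab _ (e.symm i).2 _ (e.symm j).2 ?_
    intro h
    exact hij (by rw [← e.apply_symm_apply i, ← e.apply_symm_apply j,
      Subtype.coe_injective h])

lemma seesAll [Fintype V] (col : V → V → ℕ) (hsymm : ∀ u v, col u v = col v u)
    (hrb3 : ∀ x y z : V, x ≠ y → y ≠ z → x ≠ z →
      (col x y = col y z ∨ col y z = col x z ∨ col x y = col x z))
    (S : Set V) (hNM : ∀ M, ¬ IsMod col S M) :
    ∀ v ∈ S, ∀ c, (∃ x ∈ S, ∃ y ∈ S, x ≠ y ∧ col x y = c) →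
      ∃ z ∈ S, z ≠ v ∧ col v z = c := by
  intro v hv c ⟨x, hx, y, hy, hxy, hcol⟩
  by_contra hno
  push_neg at hno
  set R : V → V → Prop := fun p q => q ∈ S ∧ p ≠ q ∧ col p q = c with hR
  set K : Set V := {u | Relation.ReflTransGen R x u} with hK
  have hxK : x ∈ K := Relation.ReflTransGen.refl
  have hyK : y ∈ K := Relation.ReflTransGen.single ⟨hy, hxy, hcol⟩
  have hKS : K ⊆ S := by
    intro u hu
    induction hu with
    | refl => exact hx
    | tail hxb hbu ih => exact hbu.1
  have hKedge : ∀ u ∈ K, ∃ z ∈ S, z ≠ u ∧ col u z = c := by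
    intro u hu
    rcases Relation.ReflTransGen.cases_tail hu with h | ⟨p, hp, hpu⟩
    · subst h
      exact ⟨y, hy, fun h => hxy h.symm, hcol⟩
    · exact ⟨p, hKS hp, hpu.2.1, by rw [hsymm]; exact hpu.2.2⟩ 
  have hvK : v ∉ K := by
    intro hvK
    obtain ⟨z, hzS, hzv, hzc⟩ := hKedge v hvK
    exact hno z hzS hzv hzc
  refine hNM K ⟨hKS, ?_, ?_, ?_⟩
  · exact (Set.one_lt_ncard K.toFinite).2 ⟨x, hxK, y, hyK, hxy⟩
  · intro h
    exact hvK (h ▸ hv)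
  · intro z hz
    refine ⟨col x z, ?_⟩
    intro u hu
    have hzK : z ∉ K := hz.2
    have hzS : z ∈ S := hz.1
    induction hu with
    | refl => rfl
    | @tail b u hxb hbu ih =>
      have hbK : b ∈ K := hxb
      have huK : u ∈ K := hxb.tail hbu
      have hbz : col b z ≠ c := by
        intro h
        exact hzK (hxb.tail ⟨hzS, fun h2 => hzK (h2 ▸ hbK), h⟩)
      have huz : col u z ≠ c := by
        intro h
        exact hzK (huK.tail ⟨hzS, fun h2 => hzK (h2 ▸ huK), h⟩)
      rcases hrb3 b u z hbu.2.1 (fun h => hzK (h ▸ huK)) (fun h => hzK (h ▸ hbK)) with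
        h | h | h
      · exact absurd (hbu.2.2 ▸ h.symm) huz
      · rw [h, ih]
      · exact absurd (hbu.2.2 ▸ h.symm) hbz

lemma noModule_twoColors [Fintype V] (col : V → V → ℕ)
    (hsymm : ∀ u v, col u v = col v u)
    (hrb3 : ∀ x y z : V, x ≠ y → y ≠ z → x ≠ z →
      (col x y = col y z ∨ col y z = col x z ∨ col x y = col x z))
    (S : Set V) (h2 : 2 ≤ S.ncard)
    (hNM : ∀ M, ¬ IsMod col S M)
    (IH : ∀ T : Set V, T.ncard < S.ncard → 2 ≤ T.ncard → AuxPart col T) :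
    ∃ a b, ∀ x ∈ S, ∀ y ∈ S, x ≠ y → (col x y = a ∨ col x y = b) := by
  by_contra h3
  push_neg at h3
  -- three distinct used colors a0 b0 c0
  obtain ⟨p, hp, p', hp', hpp'⟩ := (Set.one_lt_ncard S.toFinite).1 h2
  obtain ⟨x1, hx1, y1, hy1, hxy1, hb0⟩ :
      ∃ x ∈ S, ∃ y ∈ S, x ≠ y ∧ col x y ≠ col p p' := by
    by_contra hall
    push_neg at hall
    obtain ⟨x, hx, y, hy, hxy, hne⟩ := h3 (col p p') (col p p')
    exact hne.1 (hall x hx y hy hxy)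
  obtain ⟨x2, hx2, y2, hy2, hxy2, hc01, hc02⟩ :
      ∃ x ∈ S, ∃ y ∈ S, x ≠ y ∧ col x y ≠ col p p' ∧ col x y ≠ col x1 y1 := by
    by_contra hall
    push_neg at hall
    obtain ⟨x, hx, y, hy, hxy, hne⟩ := h3 (col p p') (col x1 y1)
    exact hne.2 (hall x hx y hy hxy hne.1)
  set a0 := col p p' with ha0d
  set b0 := col x1 y1 with hb0d
  set c0 := col x2 y2 with hc0d
  have husedA : ∃ x ∈ S, ∃ y ∈ S, x ≠ y ∧ col x y = a0 := ⟨p, hp, p', hp', hpp', rfl⟩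
  have husedB : ∃ x ∈ S, ∃ y ∈ S, x ≠ y ∧ col x y = b0 := ⟨x1, hx1, y1, hy1, hxy1, rfl⟩
  have husedC : ∃ x ∈ S, ∃ y ∈ S, x ≠ y ∧ col x y = c0 := ⟨x2, hx2, y2, hy2, hxy2, rfl⟩
  have hab0 : a0 ≠ b0 := fun h => hb0 h.symm
  have hac0 : a0 ≠ c0 := fun h => hc01 h.symm
  have hbc0 : b0 ≠ c0 := fun h => hc02 h.symm
  have hsee := seesAll col hsymm hrb3 S hNM
  -- S has at least 3 elements
  have h3card : 3 ≤ S.ncard := by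
    by_contra hlt
    have hS2 : S.ncard = 2 := by omega
    obtain ⟨u, w, huw, hSe⟩ := Set.ncard_eq_two.1 hS2
    have key : ∀ x ∈ S, ∀ y ∈ S, x ≠ y → col x y = col u w := by
      intro x hx y hy hxy
      rw [hSe] at hx hy
      simp only [mem_insert_iff, mem_singleton_iff] at hx hy
      rcases hx with h | h <;> rcases hy with h' | h'
      · exact absurd (h.trans h'.symm) hxy
      · rw [h, h']
      · rw [h, h']; exact hsymm w u
      · exact absurd (h.trans h'.symm) hxy
    exact hab0 ((key p hp p' hp' hpp').trans (key x1 hx1 y1 hy1 hxy1).symm)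
  -- remove the vertex v := p
  set v := p with hvd
  have hv : v ∈ S := hp
  set S' := S \ {v} with hS'd
  have hS'card : S'.ncard = S.ncard - 1 := Set.ncard_diff_singleton_of_mem hv
  obtain ⟨q, U, hq, hne, hsub, hdisj, hcover, hmono, a, b, htwo⟩ :=
    IH S' (by omega) (by omega)
  -- basic part facts
  have hUv : ∀ i, ∀ x ∈ U i, x ≠ v := by
    intro i x hx
    have := hsub i hx
    rw [hS'd, mem_diff, mem_singleton_iff] at this
    exact this.2
  have hUS : ∀ i, U i ⊆ S := by
    intro i x hx
    exact (hsub i hx).1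
  have hpartof : ∀ z ∈ S, z ≠ v → ∃ j, z ∈ U j := by
    intro z hz hzv
    have : z ∈ S' := ⟨hz, by rw [mem_singleton_iff]; exact hzv⟩
    rw [← hcover] at this
    exact mem_iUnion.1 this
  have hdiffp : ∀ i j, i ≠ j → ∀ x ∈ U i, ∀ y ∈ U j, x ≠ y := by
    intro i j hij x hx y hy
    exact (hdisj i j hij).ne_of_mem hx hy
  have hExNe : ∀ i : Fin q, ∃ j : Fin q, j ≠ i := by
    intro i
    refine ⟨⟨if i.val = 0 then 1 else 0, by split <;> omega⟩, ?_⟩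
    intro hc
    have := congrArg Fin.val hc
    simp only at this
    split at this <;> omega
  -- parts of size ≥ 2 are not monochromatic to v
  have hnomono : ∀ i, (∃ x ∈ U i, ∃ x' ∈ U i, x ≠ x') → ∀ c, ¬ (∀ x ∈ U i, col v x = c) := by
    intro i ⟨x, hx, x', hx', hxx'⟩ c hc
    refine hNM (U i) ⟨hUS i, (Set.one_lt_ncard (U i).toFinite).2 ⟨x, hx, x', hx', hxx'⟩, ?_, ?_⟩
    · intro hEq
      exact hUv i v (hEq ▸ hv) rfl
    · intro z hz
      rcases eq_or_ne z v with rfl | hzv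
      · exact ⟨c, fun u hu => by rw [hsymm]; exact hc u hu⟩
      · obtain ⟨j, hj⟩ := hpartof z hz.1 hzv
        have hji : j ≠ i := by
          intro hh
          exact hz.2 (hh ▸ hj)
        obtain ⟨χ, hχ⟩ := hmono i j (Ne.symm hji)
        exact ⟨χ, fun u hu => hχ u hu z hj⟩
  -- the fundamental triangle constraint
  have hF3 : ∀ i j, i ≠ j → ∀ α β, α ≠ β →
      (∃ x ∈ U i, col v x = α) → (∃ x ∈ U i, col v x = β) →
      ∀ z ∈ U j, ∀ χ, (∀ x ∈ U i, col x z = χ) →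
      ((χ ≠ α → χ ≠ β → col v z = χ) ∧
        ((χ = α ∨ χ = β) → (col v z = α ∨ col v z = β))) := by
    intro i j hij α β hαβ ⟨x, hx, hxα⟩ ⟨x', hx', hx'β⟩ z hz χ hχ
    have hxv : x ≠ v := hUv i x hx
    have hx'v : x' ≠ v := hUv i x' hx'
    have hzv : z ≠ v := hUv j z hz
    have hxz : x ≠ z := hdiffp i j hij x hx z hz
    have hx'z : x' ≠ z := hdiffp i j hij x' hx' z hz
    have T1 := hrb3 x v z hxv (Ne.symm hzv) hxz
    have T2 := hrb3 x' v z hx'v (Ne.symm hzv) hx'z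
    rw [hsymm x v, hxα, hχ x hx] at T1
    rw [hsymm x' v, hx'β, hχ x' hx'] at T2
    constructor
    · intro h1 h2
      rcases T1 with e | e | e <;> rcases T2 with f | f | f <;> omega
    · intro h1
      rcases T1 with e | e | e <;> rcases T2 with f | f | f <;> omega
  -- every part of size ≥ 2 sees exactly two colors from v
  have hpair : ∀ i, (∃ x ∈ U i, ∃ x' ∈ U i, x ≠ x') →
      ∃ α β, α ≠ β ∧ (∃ x ∈ U i, col v x = α) ∧ (∃ x ∈ U i, col v x = β) ∧
        (∀ x ∈ U i, col v x = α ∨ col v x = β) := by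
    intro i hbig
    obtain ⟨x, hx, x', hx', hxx'⟩ := hbig
    have hnm := hnomono i ⟨x, hx, x', hx', hxx'⟩
    by_cases hmo : ∀ x'' ∈ U i, col v x'' = col v x
    · exact absurd hmo (hnm (col v x))
    push_neg at hmo
    obtain ⟨x'', hx'', hne2⟩ := hmo
    refine ⟨col v x, col v x'', Ne.symm hne2, ⟨x, hx, rfl⟩, ⟨x'', hx'', rfl⟩, ?_⟩
    intro x0 hx0
    by_contra hcon
    push_neg at hcon
    obtain ⟨h0α, h0β⟩ := hcon
    -- U i ∪ {v} is a module : contradiction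
    refine hNM (insert v (U i)) ⟨?_, ?_, ?_, ?_⟩
    · intro u hu
      rcases hu with rfl | hu
      · exact hv
      · exact hUS i hu
    · exact (Set.one_lt_ncard (insert v (U i)).toFinite).2
        ⟨v, mem_insert _ _, x, mem_insert_of_mem _ hx, Ne.symm (hUv i x hx)⟩
    · intro hEq
      obtain ⟨j, hj⟩ := hExNe i
      obtain ⟨y0, hy0⟩ := hne j
      have hy0S : y0 ∈ S := hUS j hy0
      rw [← hEq] at hy0S
      rcases hy0S with h | h
      · exact hUv j y0 hy0 h
      · exact hdiffp j i hj y0 hy0 y0 h rfl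
    · intro z hz
      have hzv : z ≠ v := by
        intro h
        exact hz.2 (h ▸ mem_insert _ _)
      obtain ⟨j, hj⟩ := hpartof z hz.1 hzv
      have hji : j ≠ i := by
        intro hh
        exact hz.2 (mem_insert_of_mem _ (hh ▸ hj))
      obtain ⟨χ, hχ⟩ := hmono i j (Ne.symm hji)
      have hχz : ∀ u ∈ U i, col u z = χ := fun u hu => hχ u hu z hj
      have hvzχ : col v z = χ := by
        by_cases h1 : χ = col v x
        · have := (hF3 i j (Ne.symm hji) (col v x'') (col v x0)
            (by omega) ⟨x'', hx'', rfl⟩ ⟨x0, hx0, rfl⟩ z hj χ hχz).1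
          exact this (by omega) (by omega)
        · by_cases h2 : χ = col v x''
          · have := (hF3 i j (Ne.symm hji) (col v x) (col v x0)
              (by omega) ⟨x, hx, rfl⟩ ⟨x0, hx0, rfl⟩ z hj χ hχz).1
            exact this (by omega) (by omega)
          · have := (hF3 i j (Ne.symm hji) (col v x) (col v x'')
              (by omega) ⟨x, hx, rfl⟩ ⟨x'', hx'', rfl⟩ z hj χ hχz).1
            exact this (by omega) (by omega)
      refine ⟨χ, ?_⟩
      intro u hu
      rcases hu with rfl | hu
      · exact hvzχ
      · exact hχz u hu
  -- pigeonhole: v cannot see only two colors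
  have pigeon : ∀ α β, (∀ z ∈ S, z ≠ v → (col v z = α ∨ col v z = β)) → False := by
    intro α β hall
    obtain ⟨za, hzaS, hzav, hza⟩ := hsee v hv a0 husedA
    obtain ⟨zb, hzbS, hzbv, hzb⟩ := hsee v hv b0 husedB
    obtain ⟨zc, hzcS, hzcv, hzc⟩ := hsee v hv c0 husedC
    have h1 := hall za hzaS hzav
    have h2' := hall zb hzbS hzbv
    have h3' := hall zc hzcS hzcv
    omega
  -- main case split : does some part have ≥ 2 elements?
  by_cases hBig : ∃ i, ∃ x ∈ U i, ∃ x' ∈ U i, x ≠ x'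
  · obtain ⟨i1, hbig1⟩ := hBig
    obtain ⟨α, β, hαβ, hwα, hwβ, hall1⟩ := hpair i1 hbig1
    -- big parts other than i1 have the same pair {α, β}
    have hbigpair : ∀ α' β', α' ≠ β' → (∃ x ∈ U i1, col v x = α') →
        (∃ x ∈ U i1, col v x = β') → (∀ x ∈ U i1, col v x = α' ∨ col v x = β') →
        ∀ j, j ≠ i1 → (∃ x ∈ U j, ∃ x' ∈ U j, x ≠ x') →
        (∃ x ∈ U j, col v x = α') ∧ (∃ x ∈ U j, col v x = β') ∧
          (∀ x ∈ U j, col v x = α' ∨ col v x = β') := by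
      intro α' β' hab' hw1 hw2 hall' j hj hbigj
      obtain ⟨χ, hχ⟩ := hmono i1 j (Ne.symm hj)
      have hχz : ∀ z ∈ U j, ∀ x ∈ U i1, col x z = χ := fun z hz x hx => hχ x hx z hz
      have hstep1 : χ = α' ∨ χ = β' := by
        by_contra hno
        push_neg at hno
        have : ∀ z ∈ U j, col v z = χ := by
          intro z hz
          exact (hF3 i1 j (Ne.symm hj) α' β' hab' hw1 hw2 z hz χ (hχz z hz)).1 hno.1 hno.2
        exact hnomono j hbigj χ this
      have hallj : ∀ z ∈ U j, col v z = α' ∨ col v z = β' := by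
        intro z hz
        exact (hF3 i1 j (Ne.symm hj) α' β' hab' hw1 hw2 z hz χ (hχz z hz)).2 hstep1
      obtain ⟨α2, β2, hab2, ⟨w1, hw1', e1⟩, ⟨w2, hw2', e2⟩, hall2⟩ := hpair j hbigj
      have m1 := hallj w1 hw1'
      have m2 := hallj w2 hw2'
      rw [e1] at m1
      rw [e2] at m2
      rcases m1 with m1 | m1
      · rcases m2 with m2 | m2
        · omega
        · exact ⟨⟨w1, hw1', e1.trans m1⟩, ⟨w2, hw2', e2.trans m2⟩,
            fun x hx => by have := hall2 x hx; omega⟩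
      · rcases m2 with m2 | m2
        · exact ⟨⟨w2, hw2', e2.trans m2⟩, ⟨w1, hw1', e1.trans m1⟩,
            fun x hx => by have := hall2 x hx; omega⟩
        · omega
    -- the "one color dominant" case as a reusable fact
    have caseOne : ∀ α' β', α' ≠ β' → (∃ x ∈ U i1, col v x = α') →
        (∃ x ∈ U i1, col v x = β') → (∀ x ∈ U i1, col v x = α' ∨ col v x = β') →
        (α' = a ∨ α' = b) → β' ≠ a → β' ≠ b → False := by
      intro α' β' hab' hw1 hw2 hall' hAin hBa hBb
      by_cases hOut : ∃ z ∈ S', col v z ≠ β' ∧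
          ∀ j, z ∈ U j → ∀ x ∈ U j, ∀ x' ∈ U j, x = x'
      · -- there is a vertex outside the would-be module: build the module
        obtain ⟨z0, hz0S', hz0β, hz0small⟩ := hOut
        set M : Set V := insert v {z | z ∈ S' ∧ (col v z = β' ∨
          ∃ j, z ∈ U j ∧ ∃ x ∈ U j, ∃ x' ∈ U j, x ≠ x')} with hMd
        have hw1c := hw1
        obtain ⟨xw, hxw, hxwα⟩ := hw1c
        refine hNM M ⟨?_, ?_, ?_, ?_⟩
        · intro u hu
          rcases hu with rfl | hu
          · exact hv
          · exact hu.1.1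
        · refine (Set.one_lt_ncard M.toFinite).2
            ⟨v, mem_insert _ _, xw, ?_, Ne.symm (hUv i1 xw hxw)⟩
          refine mem_insert_of_mem _ ⟨hsub i1 hxw, Or.inr ⟨i1, hxw, hbig1⟩⟩
        · intro hEq
          have hz0M : z0 ∈ M := by rw [hEq]; exact hz0S'.1
          rcases hz0M with h | h
          · rw [hS'd, mem_diff, mem_singleton_iff] at hz0S'
            exact hz0S'.2 h
          · rcases h.2 with h1 | ⟨j, hj1, xx, hxx, xx', hxx', hxxne⟩
            · exact hz0β h1
            · exact hxxne (hz0small j hj1 xx hxx xx' hxx')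
        · intro z hz
          have hzv : z ≠ v := fun h => hz.2 (h ▸ mem_insert _ _)
          have hzS' : z ∈ S' := ⟨hz.1, by rw [mem_singleton_iff]; exact hzv⟩
          obtain ⟨j0, hj0⟩ := hpartof z hz.1 hzv
          have hznM : ¬ (col v z = β' ∨ ∃ j, z ∈ U j ∧ ∃ x ∈ U j, ∃ x' ∈ U j, x ≠ x') := by
            intro h
            exact hz.2 (mem_insert_of_mem _ ⟨hzS', h⟩)
          push_neg at hznM
          obtain ⟨hcvz, hnobig⟩ := hznM
          have hj0small : ∀ x ∈ U j0, ∀ x' ∈ U j0, x = x' := by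
            intro x hx x' hx'
            by_contra hne'
            exact hne' (hnobig j0 hj0 x hx x' hx')
          refine ⟨col v z, ?_⟩
          intro u hu
          rcases hu with rfl | hu
          · rfl
          · obtain ⟨huS', hucase⟩ := hu
            have huz : u ≠ z := fun h => hz.2 (h ▸ (mem_insert_of_mem _ ⟨huS', hucase⟩))
            rcases hucase with huβ | ⟨ju, hju, hbigju⟩
            · -- col v u = β'
              obtain ⟨ju, hju⟩ := hpartof u huS'.1
                (by rw [hS'd, mem_diff, mem_singleton_iff] at huS'; exact huS'.2)
              have hjune : ju ≠ j0 := by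
                intro hh
                exact huz (hj0small u (hh ▸ hju) z hj0)
              have hecol : col u z = a ∨ col u z = b := htwo ju j0 hjune u hju z hj0
              have huv : u ≠ v := hUv ju u hju
              have T := hrb3 v u z (Ne.symm huv) huz (Ne.symm hzv)
              rw [huβ] at T
              omega
            · -- u is in a big part
              have hjune : ju ≠ j0 := by
                intro hh
                exact huz (hj0small u (hh ▸ hju) z hj0)
              obtain ⟨χ, hχ⟩ := hmono ju j0 hjune
              have hcuz : col u z = χ := hχ u hju z hj0
              have hχab : χ = a ∨ χ = b := by
                have := htwo ju j0 hjune u hju z hj0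
                omega
              -- witnesses of α', β' on U ju
              have hwju : (∃ x ∈ U ju, col v x = α') ∧ (∃ x ∈ U ju, col v x = β') ∧
                  (∀ x ∈ U ju, col v x = α' ∨ col v x = β') := by
                rcases eq_or_ne ju i1 with rfl | hjui1
                · exact ⟨hw1, hw2, hall'⟩
                · exact hbigpair α' β' hab' hw1 hw2 hall' ju hjui1 hbigju
              obtain ⟨hwa', hwb', _⟩ := hwju
              have hχzz : ∀ x ∈ U ju, col x z = χ := fun x hx => hχ x hx z hj0
              have hF := hF3 ju j0 hjune α' β' hab' hwa' hwb' z hj0 χ hχzz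
              by_cases hχα : χ = α' ∨ χ = β'
              · have := hF.2 hχα
                omega
              · push_neg at hχα
                have := hF.1 hχα.1 hχα.2
                omega
      · -- no such vertex: all of v's colors are α', β' : pigeonhole
        push_neg at hOut
        refine pigeon α' β' ?_
        intro z hzS hzv
        have hzS' : z ∈ S' := ⟨hzS, by rw [mem_singleton_iff]; exact hzv⟩
        by_cases hzb : col v z = β'
        · exact Or.inr hzb
        · obtain ⟨j, hj, xx, hxx, xx', hxx', hxne⟩ := by
            have h' := hOut z hzS' hzb
            exact h'
          have hbigj : ∃ x ∈ U j, ∃ x' ∈ U j, x ≠ x' := ⟨xx, hxx, xx', hxx', hxne⟩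
          rcases eq_or_ne j i1 with rfl | hji1
          · exact hall' z hj
          · exact (hbigpair α' β' hab' hw1 hw2 hall' j hji1 hbigj).2.2 z hj
    -- dispatch on whether α, β are among the two global colors
    by_cases hA : α = a ∨ α = b
    · by_cases hB : β = a ∨ β = b
      · -- both dominant: all v-colors in {α, β}: pigeonhole
        refine pigeon α β ?_
        intro z hzS hzv
        obtain ⟨j, hj⟩ := hpartof z hzS hzv
        rcases eq_or_ne j i1 with rfl | hji1
        · exact hall1 z hj
        · obtain ⟨χ, hχ⟩ := hmono i1 j (Ne.symm hji1)
          have hwαc := hwα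
          obtain ⟨xw, hxw, hxwα⟩ := hwαc
          have hχval : col xw z = χ := hχ xw hxw z hj
          have hχab : col xw z = a ∨ col xw z = b := htwo i1 j (Ne.symm hji1) xw hxw z hj
          have hχαβ : χ = α ∨ χ = β := by omega
          exact (hF3 i1 j (Ne.symm hji1) α β hαβ hwα hwβ z hj χ
            (fun x hx => hχ x hx z hj)).2 hχαβ
      · push_neg at hB
        exact caseOne α β hαβ hwα hwβ hall1 hA hB.1 hB.2
    · by_cases hB : β = a ∨ β = b
      · push_neg at hA
        exact caseOne β α (Ne.symm hαβ) hwβ hwα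
          (fun x hx => (hall1 x hx).symm) hB hA.1 hA.2
      · -- neither dominant: U i1 ∪ {v} is a module
        push_neg at hA
        push_neg at hB
        refine hNM (insert v (U i1)) ⟨?_, ?_, ?_, ?_⟩
        · intro u hu
          rcases hu with rfl | hu
          · exact hv
          · exact hUS i1 hu
        · have hwαc := hwα
          obtain ⟨xw, hxw, _⟩ := hwαc
          exact (Set.one_lt_ncard (insert v (U i1)).toFinite).2
            ⟨v, mem_insert _ _, xw, mem_insert_of_mem _ hxw, Ne.symm (hUv i1 xw hxw)⟩
        · intro hEq
          obtain ⟨j, hj⟩ := hExNe i1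
          obtain ⟨y0, hy0⟩ := hne j
          have hy0S : y0 ∈ S := hUS j hy0
          rw [← hEq] at hy0S
          rcases hy0S with h | h
          · exact hUv j y0 hy0 h
          · exact hdiffp j i1 hj y0 hy0 y0 h rfl
        · intro z hz
          have hzv : z ≠ v := fun h => hz.2 (h ▸ mem_insert _ _)
          obtain ⟨j, hj⟩ := hpartof z hz.1 hzv
          have hji : j ≠ i1 := fun hh => hz.2 (mem_insert_of_mem _ (hh ▸ hj))
          obtain ⟨χ, hχ⟩ := hmono i1 j (Ne.symm hji)
          have hwαc := hwα
          obtain ⟨xw, hxw, hxwα⟩ := hwαc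
          have hχab : χ = a ∨ χ = b := by
            have h1 : col xw z = χ := hχ xw hxw z hj
            have h2' := htwo i1 j (Ne.symm hji) xw hxw z hj
            omega
          have hvz : col v z = χ := (hF3 i1 j (Ne.symm hji) α β hαβ hwα hwβ z hj χ
            (fun x hx => hχ x hx z hj)).1 (by omega) (by omega)
          refine ⟨χ, ?_⟩
          intro u hu
          rcases hu with rfl | hu
          · exact hvz
          · exact hχ u hu z hj
  · -- all parts are singletons
    push_neg at hBig
    have hS'two : ∀ x ∈ S', ∀ y ∈ S', x ≠ y → (col x y = a ∨ col x y = b) := by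
      intro x hx y hy hxy
      obtain ⟨i, hi⟩ := hpartof x hx.1 (by rw [hS'd, mem_diff, mem_singleton_iff] at hx; exact hx.2)
      obtain ⟨j, hj⟩ := hpartof y hy.1 (by rw [hS'd, mem_diff, mem_singleton_iff] at hy; exact hy.2)
      have hij : i ≠ j := by
        intro hh
        exact hxy (hBig i x hi y (hh ▸ hj))
      exact htwo i j hij x hi y hj
    -- a color not equal to a, b must colour all edges at v
    have general : ∀ ck, (∃ x ∈ S, ∃ y ∈ S, x ≠ y ∧ col x y = ck) → ck ≠ a → ck ≠ b →
        ∀ cm, (∃ x ∈ S, ∃ y ∈ S, x ≠ y ∧ col x y = cm) → cm ≠ ck → False := by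
      intro ck hck hka hkb cm hcm hmk
      have hstep1 : ∀ u ∈ S', col u v = ck := by
        intro u hu
        obtain ⟨z, hzS, hzu, hcc⟩ := hsee u hu.1 ck hck
        rcases eq_or_ne z v with rfl | hzv
        · exact hcc
        · exfalso
          have hz' : z ∈ S' := ⟨hzS, by rw [mem_singleton_iff]; exact hzv⟩
          have := hS'two u hu z hz' (fun h => hzu h.symm)
          omega
      obtain ⟨z, hzS, hzv, hcz⟩ := hsee v hv cm hcm
      have hz' : z ∈ S' := ⟨hzS, by rw [mem_singleton_iff]; exact hzv⟩
      have := hstep1 z hz'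
      rw [hsymm z v] at this
      omega
    have hsplit : (a0 ≠ a ∧ a0 ≠ b) ∨ (b0 ≠ a ∧ b0 ≠ b) ∨ (c0 ≠ a ∧ c0 ≠ b) := by omega
    rcases hsplit with ⟨h1, h2'⟩ | ⟨h1, h2'⟩ | ⟨h1, h2'⟩
    · exact general a0 husedA h1 h2' b0 husedB (Ne.symm hab0)
    · exact general b0 husedB h1 h2' a0 husedA hab0
    · exact general c0 husedC h1 h2' a0 husedA hac0


lemma auxmain [Fintype V] (col : V → V → ℕ) (hsymm : ∀ u v, col u v = col v u)
    (hrb3 : ∀ x y z : V, x ≠ y → y ≠ z → x ≠ z →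
      (col x y = col y z ∨ col y z = col x z ∨ col x y = col x z)) :
    ∀ (n : ℕ) (S : Set V), S.ncard ≤ n → 2 ≤ S.ncard → AuxPart col S := by
  intro n
  induction n with
  | zero => intro S h1 h2; omega
  | succ n ihn =>
    intro S h1 h2
    have IH : ∀ T : Set V, T.ncard < S.ncard → 2 ≤ T.ncard → AuxPart col T := by
      intro T hT h2T
      exact ihn T (by omega) h2T
    by_cases hM : ∃ M, IsMod col S M
    · obtain ⟨M, hMod⟩ := hM
      obtain ⟨hMS, hM2, hMne, hmod⟩ := hMod
      have hMfin : M.Finite := M.toFinite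
      have hMne' : M.Nonempty := by
        rcases M.eq_empty_or_nonempty with h | h
        · rw [h] at hM2; simp [Set.ncard_empty] at hM2
        · exact h
      obtain ⟨m, hm⟩ := hMne'
      obtain ⟨z, hzS, hzM⟩ : ∃ z, z ∈ S ∧ z ∉ M := by
        by_contra hc
        push_neg at hc
        exact hMne (Subset.antisymm hMS hc)
      have hdcard : (S \ M).ncard = S.ncard - M.ncard := Set.ncard_diff hMS
      have hMcard : M.ncard ≤ S.ncard := Set.ncard_le_ncard hMS
      have hmd : m ∉ S \ M := fun h => h.2 hm
      have hucard : ((S \ M) ∪ {m}).ncard = (S \ M).ncard + 1 := by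
        rw [Set.union_singleton, Set.ncard_insert_of_notMem hmd]
      have hdne : (S \ M).Nonempty := ⟨z, hzS, hzM⟩
      have hdpos : 1 ≤ (S \ M).ncard := by
        rw [Nat.one_le_iff_ne_zero]
        intro h
        exact hdne.ne_empty ((Set.ncard_eq_zero).1 h)
      exact contract col hsymm S M ⟨hMS, hM2, hMne, hmod⟩ m hm
        (ihn _ (by omega) (by omega))
    · push_neg at hM
      exact singletons col S h2
        (noModule_twoColors col hsymm hrb3 S h2 hM IH)


end GallaiAux

/-- Gallai's theorem: a colored complete graph on at least 2 vertices without
rainbow triangles has a Gallai partition. -/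


theorem stmt10 {V : Type*} [Fintype V] (col : V → V → ℕ)
    (hsymm : ∀ u v, col u v = col v u)
    (hcard : 2 ≤ Fintype.card V)
    (hrb : ¬ HasRainbowTriangle col) :
    HasGallaiPartition col := by
  have hrb3 := GallaiAux.noRb3 col hrb
  have h2 : 2 ≤ (Set.univ : Set V).ncard := by
    rw [Set.ncard_univ, Nat.card_eq_fintype_card]
    exact hcard
  obtain ⟨q, U, hq, hne, hsub, hdisj, hcover, hmono, a, b, htwo⟩ :=
    GallaiAux.auxmain col hsymm hrb3 (Set.univ : Set V).ncard Set.univ le_rfl h2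
  exact ⟨q, U, hq, hne, hdisj, hcover, hmono, a, b, htwo⟩
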